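/- Every subgroup of G₃₅₁ has order 1, 3, 9, 13, 27, or 351; in particular, G₃₅₁ has no subgroup of order 39 and no subgroup of order 117. -/

import Mathlib

/-- `F₂₇`, a finite field with 27 elements. -/
abbrev F27 : Type := GaloisField 3 3

/-- `a` is a nonzero square in `F₂₇`. -/
def IsNonzeroSquare (a : F27) : Prop := a ≠ 0 ∧ ∃ c : F27, a = c ^ 2

/-- The set of affine permutations `x ↦ a·x + b` with `a` a nonzero square. -/
def affineSet : Set (Equiv.Perm F27) :=
  { g | ∃ a b : F27, IsNonzeroSquare a ∧ ∀ x : F27, g x = a * x + b }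

instance : Fact (Nat.Prime 3) := ⟨by norm_num⟩

lemma card_F27 : Nat.card F27 = 27 := by
  rw [GaloisField.card 3 3 (by norm_num)]; norm_num

lemma card_units_F27 : Nat.card F27ˣ = 26 := by
  letI : Fintype F27 := Fintype.ofFinite _
  letI := Classical.decEq F27
  rw [Nat.card_eq_fintype_card, Fintype.card_units, ← Nat.card_eq_fintype_card, card_F27]

lemma affine_spec {g : Equiv.Perm F27} (h : g ∈ affineSet) :
    (g 1 - g 0) ≠ 0 ∧ (∃ c, g 1 - g 0 = c ^ 2) ∧ ∀ x, g x = (g 1 - g 0) * x + g 0 := by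
  obtain ⟨a, b, ⟨ha, c, hc⟩, hf⟩ := h
  have h1 : g 1 - g 0 = a := by rw [hf 1, hf 0]; ring
  refine ⟨h1 ▸ ha, ⟨c, h1 ▸ hc⟩, fun x => ?_⟩
  rw [hf x, h1, hf 0]; ring

lemma mem_affine {G : Subgroup (Equiv.Perm F27)}
    (hG : (G : Set (Equiv.Perm F27)) = affineSet) (g : G) :
    (g : Equiv.Perm F27) ∈ affineSet := hG ▸ g.2

/-- The multiplier homomorphism `G → F27ˣ`. -/
noncomputable def phi (G : Subgroup (Equiv.Perm F27))
    (hG : (G : Set (Equiv.Perm F27)) = affineSet) : G →* F27ˣ where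
  toFun g := Units.mk0 ((g : Equiv.Perm F27) 1 - (g : Equiv.Perm F27) 0)
    (affine_spec (mem_affine hG g)).1
  map_one' := by ext; simp
  map_mul' g h := by
    ext
    have hg := (affine_spec (mem_affine hG g)).2.2
    simp only [Units.val_mul, Units.val_mk0, Subgroup.coe_mul, Equiv.Perm.mul_apply]
    rw [hg ((h : Equiv.Perm F27) 1), hg ((h : Equiv.Perm F27) 0)]
    ring

lemma phi_val {G : Subgroup (Equiv.Perm F27)}
    (hG : (G : Set (Equiv.Perm F27)) = affineSet) (g : G) :
    (phi G hG g : F27) = (g : Equiv.Perm F27) 1 - (g : Equiv.Perm F27) 0 := rfl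

lemma phi_pow13 {G : Subgroup (Equiv.Perm F27)}
    (hG : (G : Set (Equiv.Perm F27)) = affineSet) (g : G) :
    (phi G hG g) ^ 13 = 1 := by
  obtain ⟨ha, ⟨c, hc⟩, -⟩ := affine_spec (mem_affine hG g)
  ext
  rw [Units.val_pow_eq_pow_val, Units.val_one, phi_val, hc]
  have hc0 : c ≠ 0 := fun h => ha (by rw [hc, h]; ring)
  letI : Fintype F27 := Fintype.ofFinite _
  have h26 : c ^ 26 = 1 := by
    have := FiniteField.pow_card_sub_one_eq_one c hc0
    rwa [show Fintype.card F27 = 27 from by rw [← Nat.card_eq_fintype_card, card_F27]] at this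
  calc (c ^ 2) ^ 13 = c ^ 26 := by ring
    _ = 1 := h26

variable {G : Subgroup (Equiv.Perm F27)}

/-- Elements of the kernel are translations. -/
lemma ker_trans (hG : (G : Set (Equiv.Perm F27)) = affineSet) (H : Subgroup G)
    (k : ((phi G hG).comp H.subtype).ker) (x : F27) :
    (((k : H) : G) : Equiv.Perm F27) x = x + (((k : H) : G) : Equiv.Perm F27) 0 := by
  have hk : phi G hG ((k : H) : G) = 1 := k.2
  have h1 : (((k : H) : G) : Equiv.Perm F27) 1 - (((k : H) : G) : Equiv.Perm F27) 0 = 1 := by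
    have := congrArg Units.val hk
    rwa [phi_val] at this
  have hs := (affine_spec (mem_affine hG ((k : H) : G))).2.2
  rw [hs x, h1]; ring

/-- The additive subgroup of translation parts of the kernel. -/
noncomputable def Bsub (hG : (G : Set (Equiv.Perm F27)) = affineSet) (H : Subgroup G) :
    AddSubgroup F27 where
  carrier := {b | ∃ k : ((phi G hG).comp H.subtype).ker,
    (((k : H) : G) : Equiv.Perm F27) 0 = b}
  zero_mem' := ⟨1, by simp⟩
  add_mem' := by
    rintro b₁ b₂ ⟨k₁, h₁⟩ ⟨k₂, h₂⟩
    refine ⟨k₁ * k₂, ?_⟩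
    have h3 : ((((k₁ * k₂ : _) : H) : G) : Equiv.Perm F27) 0
        = (((k₁ : H) : G) : Equiv.Perm F27) ((((k₂ : H) : G) : Equiv.Perm F27) 0) := rfl
    rw [h3, h₂, ker_trans hG H k₁ b₂, h₁]; ring
  neg_mem' := by
    rintro b ⟨k, h⟩
    refine ⟨k⁻¹, ?_⟩
    have hval : ((((k⁻¹ : _) : H) : G) : Equiv.Perm F27)
        = ((((k : _) : H) : G) : Equiv.Perm F27)⁻¹ := rfl
    rw [hval]
    have h2 : (((k : H) : G) : Equiv.Perm F27) (-b) = 0 := by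
      rw [ker_trans hG H k (-b), h]; ring
    rw [← h2]
    exact Equiv.symm_apply_apply _ _

lemma card_ker_eq (hG : (G : Set (Equiv.Perm F27)) = affineSet) (H : Subgroup G) :
    Nat.card ((phi G hG).comp H.subtype).ker = Nat.card (Bsub hG H) := by
  apply Nat.card_congr
  refine Equiv.ofBijective (fun k => ⟨(((k : H) : G) : Equiv.Perm F27) 0, ⟨k, rfl⟩⟩) ⟨?_, ?_⟩
  · intro k₁ k₂ hk
    have hb : (((k₁ : H) : G) : Equiv.Perm F27) 0 = (((k₂ : H) : G) : Equiv.Perm F27) 0 :=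
      congrArg Subtype.val hk
    have h3 : (((k₁ : H) : G) : Equiv.Perm F27) = (((k₂ : H) : G) : Equiv.Perm F27) :=
      Equiv.ext fun x => by rw [ker_trans hG H k₁ x, ker_trans hG H k₂ x, hb]
    exact Subtype.ext (Subtype.ext (Subtype.ext h3))
  · rintro ⟨b, k, hk⟩; exact ⟨k, Subtype.ext hk⟩

/-- Conjugation invariance: if `b ∈ Bsub` and `x ∈ H` with multiplier `a`, then `a*b ∈ Bsub`. -/
lemma Bsub_smul (hG : (G : Set (Equiv.Perm F27)) = affineSet) (H : Subgroup G)
    (x : H) {b : F27} (hb : b ∈ Bsub hG H) :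
    ((phi G hG ((x : G)) : F27)) * b ∈ Bsub hG H := by
  obtain ⟨k, hk⟩ := hb
  have hker : x * (k : H) * x⁻¹ ∈ ((phi G hG).comp H.subtype).ker := by
    have hk2 : ((phi G hG).comp H.subtype) (k : H) = 1 := k.2
    simp [MonoidHom.mem_ker, map_mul, hk2]
  refine ⟨⟨x * (k : H) * x⁻¹, hker⟩, ?_⟩
  set f := ((x : G) : Equiv.Perm F27) with hf
  set t := (((k : H) : G) : Equiv.Perm F27) with ht
  have hval : ((((⟨x * (k : H) * x⁻¹, hker⟩ : ((phi G hG).comp H.subtype).ker) : H) : G) :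
      Equiv.Perm F27) 0 = f (t (f⁻¹ 0)) := rfl
  rw [hval, ker_trans hG H k (f⁻¹ 0), hk]
  have hs := (affine_spec (mem_affine hG (x : G))).2.2
  have ha : (phi G hG (x : G) : F27) = f 1 - f 0 := rfl
  rw [hs (f⁻¹ 0 + b), ha]
  have h0 : f (f⁻¹ 0) = 0 := Equiv.apply_symm_apply f 0
  rw [hs (f⁻¹ 0)] at h0
  linear_combination h0

lemma div27 {d : ℕ} (h : d ∣ 27) : d = 1 ∨ d = 3 ∨ d = 9 ∨ d = 27 := by
  have hle := Nat.le_of_dvd (by norm_num) h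
  interval_cases d <;> omega

lemma div26 {d : ℕ} (h : d ∣ 26) : d = 1 ∨ d = 2 ∨ d = 13 ∨ d = 26 := by
  have hle := Nat.le_of_dvd (by norm_num) h
  interval_cases d <;> omega

lemma main (hG : (G : Set (Equiv.Perm F27)) = affineSet) (H : Subgroup G) :
    Nat.card H ∈ ({1, 3, 9, 13, 27, 351} : Set ℕ) := by
  classical
  set ψ := (phi G hG).comp H.subtype with hψ
  have hsplit : Nat.card H = Nat.card ψ.range * Nat.card ψ.ker := by
    rw [Subgroup.card_eq_card_quotient_mul_card_subgroup ψ.ker,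
      Nat.card_congr (QuotientGroup.quotientKerEquivRange ψ).toEquiv]
  have hKdvd : Nat.card (Bsub hG H) ∣ 27 := by
    have := AddSubgroup.card_addSubgroup_dvd_card (Bsub hG H)
    rwa [card_F27] at this
  have hker : Nat.card ψ.ker = Nat.card (Bsub hG H) := card_ker_eq hG H
  have hRpow : ∀ u : ψ.range, (u : F27ˣ) ^ 13 = 1 := by
    rintro ⟨u, x, rfl⟩
    exact phi_pow13 hG (x : G)
  have hRdvd : Nat.card ψ.range ∣ 26 := by
    have h1 : Nat.card ψ.range ∣ Nat.card F27ˣ := Subgroup.card_subgroup_dvd_card _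
    rwa [card_units_F27] at h1
  have hR2 : ¬ (2 ∣ Nat.card ψ.range) := by
    intro h2
    letI : Fintype ψ.range := Fintype.ofFinite _
    rw [Nat.card_eq_fintype_card] at h2
    obtain ⟨u, hu⟩ := exists_prime_orderOf_dvd_card 2 h2
    have h13 : u ^ 13 = 1 := by
      have := hRpow u
      exact Subtype.ext (by simpa using this)
    have hdd : orderOf u ∣ 13 := orderOf_dvd_of_pow_eq_one h13
    rw [hu] at hdd
    norm_num at hdd
  have hRcases : Nat.card ψ.range = 1 ∨ Nat.card ψ.range = 13 := by
    rcases div26 hRdvd with h | h | h | h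
    · exact Or.inl h
    · exact absurd (by omega) hR2
    · exact Or.inr h
    · exact absurd (by omega) hR2
  rcases hRcases with hR | hR
  · rw [hsplit, hR, one_mul, hker]
    rcases div27 hKdvd with h | h | h | h <;> simp [h]
  · have hK1or27 : Nat.card (Bsub hG H) = 1 ∨ Nat.card (Bsub hG H) = 27 := by
      by_cases hK1 : Nat.card (Bsub hG H) = 1
      · exact Or.inl hK1
      right
      have hbot : Bsub hG H ≠ ⊥ := by
        intro hb; rw [hb] at hK1; simp at hK1
      obtain ⟨b0, hb0B, hb0⟩ : ∃ b0 ∈ Bsub hG H, b0 ≠ 0 := by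
        by_contra hc
        push_neg at hc
        exact hbot (le_antisymm (fun y hy => by simpa using hc y hy) bot_le)
      have hnt : Nontrivial ψ.range :=
        Finite.one_lt_card_iff_nontrivial.mp (by omega)
      obtain ⟨u, hu1⟩ := exists_ne (1 : ψ.range)
      have hu13 : (u : F27ˣ) ^ 13 = 1 := hRpow u
      have huval1 : (u : F27ˣ) ≠ 1 := fun h => hu1 (Subtype.ext h)
      have hord : orderOf (u : F27ˣ) = 13 := by
        have hd := orderOf_dvd_of_pow_eq_one hu13
        rcases (Nat.Prime.eq_one_or_self_of_dvd (by norm_num) _ hd) with h1 | h1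
        · exact absurd (orderOf_eq_one_iff.mp h1) huval1
        · exact h1
      set a : F27 := ((u : F27ˣ) : F27) with hadef
      have horda : orderOf a = 13 := by rw [hadef, orderOf_units, hord]
      obtain ⟨x, hx⟩ := u.2
      have hax : (phi G hG ((x : G)) : F27) = a := by
        rw [hadef]; exact congrArg Units.val hx
      have hpow : ∀ n : ℕ, a ^ n * b0 ∈ Bsub hG H := by
        intro n
        induction n with
        | zero => simpa using hb0B
        | succ n ih =>
          have h4 := Bsub_smul hG H x ih
          rw [hax] at h4
          have heq : a * (a ^ n * b0) = a ^ (n + 1) * b0 := by ring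
          rwa [heq] at h4
      have hinj : Function.Injective (fun i : Fin 13 => (⟨a ^ (i : ℕ) * b0, hpow i⟩ :
          Bsub hG H)) := by
        intro i j hij
        have h1 : a ^ (i : ℕ) * b0 = a ^ (j : ℕ) * b0 := congrArg Subtype.val hij
        have h2 : a ^ (i : ℕ) = a ^ (j : ℕ) := mul_right_cancel₀ hb0 h1
        have h3 := pow_injOn_Iio_orderOf (x := a)
          (by rw [horda]; exact Set.mem_Iio.mpr i.isLt)
          (by rw [horda]; exact Set.mem_Iio.mpr j.isLt) h2
        exact Fin.ext h3
      have h13le : 13 ≤ Nat.card (Bsub hG H) := by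
        have h5 := Nat.card_le_card_of_injective _ hinj
        simpa using h5
      rcases div27 hKdvd with h | h | h | h <;> omega
    rw [hsplit, hR, hker]
    rcases hK1or27 with h | h <;> simp [h]

/-- Every subgroup of `G₃₅₁` has order 1, 3, 9, 13, 27 or 351; in particular there is no
subgroup of order 39 and no subgroup of order 117. -/
theorem statement14 (G : Subgroup (Equiv.Perm F27))
    (hG : (G : Set (Equiv.Perm F27)) = affineSet) :
    (∀ H : Subgroup G, Nat.card H ∈ ({1, 3, 9, 13, 27, 351} : Set ℕ)) ∧
    (¬ ∃ H : Subgroup G, Nat.card H = 39) ∧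
    (¬ ∃ H : Subgroup G, Nat.card H = 117) := by
  refine ⟨fun H => main hG H, ?_, ?_⟩
  · rintro ⟨H, hH⟩
    have := main hG H
    rw [hH] at this
    simp at this
  · rintro ⟨H, hH⟩
    have := main hG H
    rw [hH] at this
    simp at this
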